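/- On the Poisson algebra ℂ(x_1,...,x_g)[y_1,...,y_g] with brackets {x_α, y_β} = −2Π(x_α)δ_{αβ}, {x_α, x_β} = {y_α, y_β} = 0, where Π(X) = ∏_{i=1}^{g+3}(X − a_i), the series Y(t) = ∑_α (y_α/Π(x_α))/(t − x_α) satisfies {Y(t), Y(s)} = (2/(s−t)) ( ∂_s Y(s) + ∂_t Y(t) − (2/(s−t))(Y(s) − Y(t)) ). -/

import Mathlib

open Finset

/-- Partial derivative in the variable `x_α` of a function `F(x, y)` on `ℂ^g × ℂ^g`. -/
noncomputable def pdx (g : ℕ) (F : (Fin g → ℂ) → (Fin g → ℂ) → ℂ) (α : Fin g)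
    (x y : Fin g → ℂ) : ℂ :=
  deriv (fun z => F (Function.update x α z) y) (x α)

/-- Partial derivative in the variable `y_α` of a function `F(x, y)` on `ℂ^g × ℂ^g`. -/
noncomputable def pdy (g : ℕ) (F : (Fin g → ℂ) → (Fin g → ℂ) → ℂ) (α : Fin g)
    (x y : Fin g → ℂ) : ℂ :=
  deriv (fun z => F x (Function.update y α z)) (y α)

/-- The Poisson bracket on functions of `(x, y)` determined by
`{x_α, y_β} = -2 Π(x_α) δ_{αβ}`, `{x_α, x_β} = {y_α, y_β} = 0`, where
`Π(X) = ∏_{i=1}^{g+3} (X - a_i)`. -/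
noncomputable def PB (g : ℕ) (a : Fin (g+3) → ℂ)
    (F G : (Fin g → ℂ) → (Fin g → ℂ) → ℂ) (x y : Fin g → ℂ) : ℂ :=
  ∑ α, (-2 * ∏ i, (x α - a i)) *
    (pdx g F α x y * pdy g G α x y - pdy g F α x y * pdx g G α x y)

lemma key_identity (P u v D yy : ℂ) (hP : P ≠ 0) (hu : u ≠ 0) (hv : v ≠ 0)
    (huv : u - v ≠ 0) :
    (-2 * P) * (yy * (D * v⁻¹ + P⁻¹ * (1 / v ^ 2)) * (P * u)⁻¹
        - (P * v)⁻¹ * (yy * (D * u⁻¹ + P⁻¹ * (1 / u ^ 2))))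
      = 2 / (u - v) * (-(yy / P / u ^ 2) + -(yy / P / v ^ 2)
          - 2 / (u - v) * (yy / P / u - yy / P / v)) := by
  have hA : v * (P * v ^ 2) * (P * u) ≠ 0 :=
    mul_ne_zero (mul_ne_zero hv (mul_ne_zero hP (pow_ne_zero 2 hv))) (mul_ne_zero hP hu)
  have hB : P * v * (u * (P * u ^ 2)) ≠ 0 :=
    mul_ne_zero (mul_ne_zero hP hv) (mul_ne_zero hu (mul_ne_zero hP (pow_ne_zero 2 hu)))
  have h1 : P * u ^ 2 ≠ 0 := mul_ne_zero hP (pow_ne_zero 2 hu)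
  have h2 : P * v ^ 2 ≠ 0 := mul_ne_zero hP (pow_ne_zero 2 hv)
  have h3 : P * u ≠ 0 := mul_ne_zero hP hu
  have h4 : P * v ≠ 0 := mul_ne_zero hP hv
  have h5 : P * u ^ 2 * (P * v ^ 2) ≠ 0 := mul_ne_zero h1 h2
  have h6 : P * u * (P * v) ≠ 0 := mul_ne_zero h3 h4
  have h7 : (u - v) * (P * u * (P * v)) ≠ 0 := mul_ne_zero huv h6
  have h8 : (u - v) * (P * u ^ 2 * (P * v ^ 2)) ≠ 0 := mul_ne_zero huv h5
  calc (-2 * P) * (yy * (D * v⁻¹ + P⁻¹ * (1 / v ^ 2)) * (P * u)⁻¹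
        - (P * v)⁻¹ * (yy * (D * u⁻¹ + P⁻¹ * (1 / u ^ 2))))
      = (-2*P) * ((yy * (D/v + 1/(P*v^2))) * (1/(P*u))
          - (1/(P*v)) * (yy*(D/u + 1/(P*u^2)))) := by ring
    _ = -2*(u-v)*(yy/(P*u^2*v^2)) := by field_simp; ring
    _ = 2 / (u - v) * (-(yy / P / u ^ 2) + -(yy / P / v ^ 2)
          - 2 / (u - v) * (yy / P / u - yy / P / v)) := by
        rw [eq_comm]
        calc 2 / (u - v) * (-(yy / P / u ^ 2) + -(yy / P / v ^ 2)
              - 2 / (u - v) * (yy / P / u - yy / P / v))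
            = -2 * (u - v) * (yy / (P * u ^ 2 * v ^ 2)) := by field_simp; ring
          _ = -2*(u-v)*(yy/(P*u^2*v^2)) := by ring

section Aux

variable {g : ℕ} (a : Fin (g+3) → ℂ)

lemma hasDerivAt_Y (x y : Fin g → ℂ) (s : ℂ) (hs : ∀ α, s ≠ x α) :
    HasDerivAt (fun σ => ∑ α, (y α / ∏ i, (x α - a i)) / (σ - x α))
      (∑ α, -((y α / ∏ i, (x α - a i)) / (s - x α) ^ 2)) s := by
  apply HasDerivAt.fun_sum
  intro α _
  have h1 : HasDerivAt (fun σ : ℂ => σ - x α) 1 s := (hasDerivAt_id s).sub_const _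
  have h2 : HasDerivAt (fun σ : ℂ => (σ - x α)⁻¹) (-1 / (s - x α) ^ 2) s :=
    h1.inv (sub_ne_zero.mpr (hs α))
  have h3 := h2.const_mul (y α / ∏ i, (x α - a i))
  have he : (fun σ : ℂ => (y α / ∏ i, (x α - a i)) * (σ - x α)⁻¹)
      = fun σ : ℂ => (y α / ∏ i, (x α - a i)) / (σ - x α) := by
    funext σ; ring
  rw [he] at h3
  refine h3.congr_deriv ?_
  ring

lemma pdy_Y (t : ℂ) (α : Fin g) (x y : Fin g → ℂ) :
    pdy g (fun x' y' => ∑ β, (y' β / ∏ i, (x' β - a i)) / (t - x' β)) α x y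
      = ((∏ i, (x α - a i)) * (t - x α))⁻¹ := by
  unfold pdy
  have H : HasDerivAt
      (fun z => ∑ β, (Function.update y α z β / ∏ i, (x β - a i)) / (t - x β))
      (∑ β, if β = α then ((∏ i, (x α - a i)) * (t - x α))⁻¹ else 0) (y α) := by
    apply HasDerivAt.fun_sum
    intro β _
    rcases eq_or_ne β α with rfl | hβ
    · simp only [if_pos rfl]
      have he : (fun z => (Function.update y β z β / ∏ i, (x β - a i)) / (t - x β))
          = fun z => z / ((∏ i, (x β - a i)) * (t - x β)) := by
        funext z; rw [Function.update_self, div_div]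
      rw [he]
      simpa [one_div] using (hasDerivAt_id (y β)).div_const ((∏ i, (x β - a i)) * (t - x β))
    · simp only [if_neg hβ]
      have he : (fun z => (Function.update y α z β / ∏ i, (x β - a i)) / (t - x β))
          = fun _ => (y β / ∏ i, (x β - a i)) / (t - x β) := by
        funext z; rw [Function.update_of_ne hβ]
      rw [he]; exact hasDerivAt_const _ _
  rw [H.deriv]
  simp

lemma pdx_Y (t : ℂ) (α : Fin g) (x y : Fin g → ℂ) (hx : ∀ i, x α ≠ a i) (ht : t ≠ x α) :
    pdx g (fun x' y' => ∑ β, (y' β / ∏ i, (x' β - a i)) / (t - x' β)) α x y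
      = y α * (deriv (fun z => (∏ i, (z - a i))⁻¹) (x α) * (t - x α)⁻¹
          + (∏ i, (x α - a i))⁻¹ * (1 / (t - x α) ^ 2)) := by
  unfold pdx
  have hPne : (∏ i, (x α - a i)) ≠ 0 :=
    Finset.prod_ne_zero_iff.mpr fun i _ => sub_ne_zero.mpr (hx i)
  have hPdiff : DifferentiableAt ℂ (fun z : ℂ => (∏ i, (z - a i))⁻¹) (x α) := by
    exact (DifferentiableAt.fun_finsetProd fun i _ =>
      (differentiableAt_id.sub_const (a i))).inv hPne
  have hP : HasDerivAt (fun z : ℂ => (∏ i, (z - a i))⁻¹)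
      (deriv (fun z : ℂ => (∏ i, (z - a i))⁻¹) (x α)) (x α) := hPdiff.hasDerivAt
  have hQ : HasDerivAt (fun z : ℂ => (t - z)⁻¹) (1 / (t - x α) ^ 2) (x α) := by
    have h1 : HasDerivAt (fun z : ℂ => t - z) (-1) (x α) := (hasDerivAt_id _).const_sub t
    have h2 := h1.inv (sub_ne_zero.mpr ht)
    refine h2.congr_deriv ?_
    ring
  have H := (hP.mul hQ).const_mul (y α)
  have He : ∀ z : ℂ,
      (∑ β, (y β / ∏ i, (Function.update x α z β - a i)) / (t - Function.update x α z β))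
        = y α * ((∏ i, (z - a i))⁻¹ * (t - z)⁻¹)
          + ∑ β ∈ univ.erase α, (y β / ∏ i, (x β - a i)) / (t - x β) := by
    intro z
    rw [← Finset.add_sum_erase _ _ (Finset.mem_univ α)]
    congr 1
    · rw [Function.update_self]
      field_simp
    · apply Finset.sum_congr rfl
      intro β hβ
      rw [Function.update_of_ne (Finset.ne_of_mem_erase hβ)]
  have H2 : HasDerivAt
      (fun z => ∑ β, (y β / ∏ i, (Function.update x α z β - a i)) / (t - Function.update x α z β))
      (y α * (deriv (fun z : ℂ => (∏ i, (z - a i))⁻¹) (x α) * (t - x α)⁻¹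
          + (∏ i, (x α - a i))⁻¹ * (1 / (t - x α) ^ 2))) (x α) := by
    have := H.add_const (∑ β ∈ univ.erase α, (y β / ∏ i, (x β - a i)) / (t - x β))
    exact this.congr_of_eventuallyEq (Filter.Eventually.of_forall He)
  exact H2.deriv

end Aux

set_option maxHeartbeats 2000000 in
/-- in the Poisson algebra `ℂ(x₁,…,x_g)[y₁,…,y_g]` with
`{x_α, y_β} = -2Π(x_α)δ_{αβ}`, the series `Y(t) = ∑_α (y_α/Π(x_α))/(t - x_α)` satisfies
`{Y(t), Y(s)} = (2/(s-t)) (∂_s Y(s) + ∂_t Y(t) - (2/(s-t))(Y(s) - Y(t)))`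
(stated pointwise away from the poles). -/
theorem stmt_11 (g : ℕ) (hg : 1 ≤ g) (a : Fin (g+3) → ℂ) (ha : Function.Injective a) :
    ∀ x y : Fin g → ℂ, Function.Injective x → (∀ α i, x α ≠ a i) →
    ∀ s t : ℂ, s ≠ t → (∀ α, s ≠ x α) → (∀ α, t ≠ x α) →
      PB g a (fun x' y' => ∑ α, (y' α / ∏ i, (x' α - a i)) / (t - x' α))
             (fun x' y' => ∑ α, (y' α / ∏ i, (x' α - a i)) / (s - x' α)) x y
        = (2 / (s - t)) *
            (deriv (fun σ => ∑ α, (y α / ∏ i, (x α - a i)) / (σ - x α)) s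
             + deriv (fun τ => ∑ α, (y α / ∏ i, (x α - a i)) / (τ - x α)) t
             - (2 / (s - t)) *
                 ((∑ α, (y α / ∏ i, (x α - a i)) / (s - x α))
                  - ∑ α, (y α / ∏ i, (x α - a i)) / (t - x α))) := by
  intro x y hxinj hxa s t hst hs ht
  rw [(hasDerivAt_Y a x y s hs).deriv, (hasDerivAt_Y a x y t ht).deriv]
  unfold PB
  rw [← Finset.sum_add_distrib, ← Finset.sum_sub_distrib, Finset.mul_sum,
    ← Finset.sum_sub_distrib, Finset.mul_sum]
  apply Finset.sum_congr rfl
  intro α _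
  rw [pdx_Y a t α x y (fun i => hxa α i) (ht α),
      pdx_Y a s α x y (fun i => hxa α i) (hs α),
      pdy_Y a t α x y, pdy_Y a s α x y]
  have hP : (∏ i, (x α - a i)) ≠ 0 :=
    Finset.prod_ne_zero_iff.mpr fun i _ => sub_ne_zero.mpr (hxa α i)
  have h1 : s - x α ≠ 0 := sub_ne_zero.mpr (hs α)
  have h2 : t - x α ≠ 0 := sub_ne_zero.mpr (ht α)
  have h3 : s - t ≠ 0 := sub_ne_zero.mpr hst
  have hw : s - t = (s - x α) - (t - x α) := by ring
  rw [hw]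
  exact key_identity (∏ i, (x α - a i)) (s - x α) (t - x α)
    (deriv (fun z => (∏ i, (z - a i))⁻¹) (x α)) (y α) hP h1 h2 (hw ▸ h3)
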